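/- Let (X,d) be a complete metric space, S a finite nonempty set, and Γ a group generated by S acting on X by isometries. For g ∈ X define disp(g) = max over γ ∈ S of d(γ·g, g). Suppose P : X → X satisfies: (i) there is a constant 0 < C < 1 with disp(P g) ≤ C · disp(g) for all g ∈ X, and (ii) d(P g, g) ≤ disp(g) for all g ∈ X. Then for every g ∈ X the sequence (Pⁿ g) converges to a limit g∞ ∈ X, and g∞ is fixed by every element of Γ. -/
import Mathlib


open Filter

/-- Contraction argument on a complete metric space: if `Γ` is generated by a finite
set `S` and acts by isometries on a complete metric space `X`, `disp g` is the
maximal displacement of `g` by generators, and `P : X → X` satisfies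
`disp (P g) ≤ C · disp g` (with `0 < C < 1`) and `dist (P g) g ≤ disp g`, then the
iterates `Pⁿ g` converge and the limit is fixed by every element of `Γ`. -/
theorem stmt_6 {Γ X : Type*} [Group Γ] [MetricSpace X] [CompleteSpace X]
    [MulAction Γ X] (hiso : ∀ γ : Γ, Isometry (fun x : X => γ • x))
    (S : Finset Γ) (hS : S.Nonempty)
    (hgen : Subgroup.closure (S : Set Γ) = ⊤)
    (P : X → X) (C : ℝ) (hC0 : 0 < C) (hC1 : C < 1)
    (hcontract : ∀ g : X,
      S.sup' hS (fun γ => dist (γ • P g) (P g)) ≤ C * S.sup' hS (fun γ => dist (γ • g) g))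
    (hmove : ∀ g : X, dist (P g) g ≤ S.sup' hS (fun γ => dist (γ • g) g)) :
    ∀ g : X, ∃ glim : X,
      Tendsto (fun n : ℕ => P^[n] g) atTop (nhds glim) ∧ ∀ γ : Γ, γ • glim = glim := by
  intro g
  set D : X → ℝ := fun x => S.sup' hS (fun γ => dist (γ • x) x) with hDdef
  have hD : ∀ n : ℕ, D (P^[n] g) ≤ C ^ n * D g := by
    intro n
    induction n with
    | zero => simp
    | succ n ih =>
      rw [Function.iterate_succ_apply']
      calc D (P (P^[n] g)) ≤ C * D (P^[n] g) := hcontract _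
        _ ≤ C * (C ^ n * D g) := by
            exact mul_le_mul_of_nonneg_left ih hC0.le
        _ = C ^ (n + 1) * D g := by ring
  have hstep : ∀ n : ℕ, dist (P^[n] g) (P^[n+1] g) ≤ D g * C ^ n := by
    intro n
    rw [Function.iterate_succ_apply', dist_comm]
    calc dist (P (P^[n] g)) (P^[n] g) ≤ D (P^[n] g) := hmove _
      _ ≤ C ^ n * D g := hD n
      _ = D g * C ^ n := by ring
  have hcau : CauchySeq (fun n : ℕ => P^[n] g) :=
    cauchySeq_of_le_geometric C (D g) hC1 hstep
  obtain ⟨glim, hglim⟩ := cauchySeq_tendsto_of_complete hcau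
  refine ⟨glim, hglim, ?_⟩
  have hfix : ∀ γ ∈ S, γ • glim = glim := by
    intro γ hγ
    have h1 : Tendsto (fun n : ℕ => dist (γ • P^[n] g) (P^[n] g)) atTop
        (nhds (dist (γ • glim) glim)) := by
      have := ((hiso γ).continuous.tendsto glim).comp hglim
      exact Tendsto.dist this hglim
    have h2 : Tendsto (fun n : ℕ => dist (γ • P^[n] g) (P^[n] g)) atTop (nhds 0) := by
      have hge : Tendsto (fun n : ℕ => C ^ n * D g) atTop (nhds 0) := by
        have := tendsto_pow_atTop_nhds_zero_of_lt_one hC0.le hC1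
        simpa using this.mul_const (D g)
      refine squeeze_zero (fun n => dist_nonneg) (fun n => ?_) hge
      exact le_trans (Finset.le_sup' (fun γ => dist (γ • P^[n] g) (P^[n] g)) hγ) (hD n)
    have := tendsto_nhds_unique h1 h2
    rw [← dist_eq_zero]
    exact this
  have hsub : Subgroup.closure (S : Set Γ) ≤ MulAction.stabilizer Γ glim :=
    (Subgroup.closure_le _).mpr hfix
  intro γ
  have : γ ∈ MulAction.stabilizer Γ glim := hsub (hgen ▸ Subgroup.mem_top γ)
  exact this
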